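/- The Kullback–Leibler divergence of μ^{1,0} with respect to UNIF equals 1 − log 2; equivalently, ∫₀^{2π} (1−cos θ)·log(1−cos θ) dθ/(2π) = 1 − log 2. -/

import Mathlib

open MeasureTheory Complex Filter Topology intervalIntegral
open scoped ENNReal Real

noncomputable section

/-- Normalized arclength (uniform) probability measure on the unit circle 𝕋 ⊆ ℂ. -/
def UNIF : Measure ℂ :=
  (ENNReal.ofReal (2 * Real.pi))⁻¹ •
    (volume.restrict (Set.Ico (0 : ℝ) (2 * Real.pi))).map
      (fun θ : ℝ => Complex.exp (θ * Complex.I))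

open Classical in
/-- Kullback–Leibler divergence 𝒦(ν|μ) ∈ [0,∞]. -/
def KL (ν μ : Measure ℂ) : ℝ≥0∞ :=
  if ν ≪ μ ∧ Integrable (fun z => Real.log ((ν.rnDeriv μ) z).toReal) ν then
    ENNReal.ofReal (∫ z, Real.log ((ν.rnDeriv μ) z).toReal ∂ν)
  else ⊤

/-- Measure with density `1 − g cos θ` with respect to UNIF (z = e^{iθ}). -/
def mu10 (g : ℝ) : Measure ℂ :=
  UNIF.withDensity fun z => ENNReal.ofReal (1 - g * Real.cos z.arg)

/-- Measure with density `1 − g cos 2θ` with respect to UNIF (z = e^{iθ}). -/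
def mu11 (g : ℝ) : Measure ℂ :=
  UNIF.withDensity fun z => ENNReal.ofReal (1 - g * Real.cos (2 * z.arg))

/-- Measure with density `1 − (4g/3) cos θ + (g/3) cos 2θ` with respect to UNIF (z = e^{iθ}). -/
def mu20 (g : ℝ) : Measure ℂ :=
  UNIF.withDensity fun z =>
    ENNReal.ofReal (1 - (4 * g / 3) * Real.cos z.arg + (g / 3) * Real.cos (2 * z.arg))

section AuxProofs

open Real Set Filter
open scoped NNReal

lemma integrableOn_log_Ioc01 : IntegrableOn Real.log (Set.Ioc 0 1) volume := by
  have key : ∀ n : ℕ, IntegrableOn Real.log (Set.Ioc ((1:ℝ)/(n+1)) 1) volume := by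
    intro n
    refine (ContinuousOn.integrableOn_Icc ?_).mono_set Set.Ioc_subset_Icc_self
    exact Real.continuousOn_log.mono (fun x hx => by
        have h0 : (0:ℝ) < 1/(n+1) := by positivity
        exact ne_of_gt (lt_of_lt_of_le h0 hx.1))
  refine integrableOn_Ioc_of_intervalIntegral_norm_bounded_left
    (l := atTop) (I := 1) (a := fun n : ℕ => (1:ℝ)/(n+1)) (f := Real.log) key ?_ ?_
  · exact tendsto_one_div_add_atTop_nhds_zero_nat
  · filter_upwards with n
    have hn : (0:ℝ) < 1/(n+1) := by positivity
    have hle : (1:ℝ)/(n+1) ≤ 1 := by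
      rw [div_le_one (by positivity)]; linarith [Nat.cast_nonneg (α := ℝ) n]
    have heq : ∀ x ∈ Set.Ioc ((1:ℝ)/(n+1)) 1, ‖Real.log x‖ = -Real.log x := by
      intro x hx
      rw [Real.norm_eq_abs, _root_.abs_of_nonpos (Real.log_nonpos (le_of_lt (lt_of_lt_of_le hn hx.1.le)) hx.2)]
    rw [setIntegral_congr_fun measurableSet_Ioc heq]
    rw [← intervalIntegral.integral_of_le hle, intervalIntegral.integral_neg,
      integral_log]
    have := Real.log_nonpos (le_of_lt hn) hle
    simp only [Real.log_one]
    nlinarith [Real.log_nonpos (le_of_lt hn) hle, hn]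

lemma intIntLogSinHalf : IntervalIntegrable (fun x => Real.log (Real.sin x)) volume 0 (π/2) := by
  rw [intervalIntegrable_iff_integrableOn_Ioc_of_le (by positivity)]
  have h1 : IntegrableOn (fun x => Real.log (Real.sin x)) (Set.Ioc 0 1) volume := by
    have hmeas : AEStronglyMeasurable (fun x => Real.log (Real.sin x))
        (volume.restrict (Set.Ioc (0:ℝ) 1)) :=
      (Real.measurable_log.comp Real.measurable_sin).aestronglyMeasurable
    refine Integrable.mono (f := fun x => Real.log (Real.sin x))
      (g := fun x => ‖Real.log x‖ + Real.log (π/2)) ?_ hmeas ?_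
    · exact (integrableOn_log_Ioc01.norm.add (integrableOn_const measure_Ioc_lt_top.ne))
    · rw [ae_restrict_iff' measurableSet_Ioc]
      filter_upwards with x hx
      have hx0 : 0 < x := hx.1
      have hx1 : x ≤ 1 := hx.2
      have hxpi : x ≤ π / 2 := hx1.trans (by nlinarith [Real.pi_gt_three])
      have hs0 : 0 < Real.sin x := Real.sin_pos_of_pos_of_lt_pi hx0 (by nlinarith [Real.pi_gt_three])
      have hs1 : Real.sin x ≤ x := (Real.sin_lt hx0).le
      have hs2 : 2 / π * x ≤ Real.sin x := Real.mul_le_sin hx0.le hxpi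
      have hlog1 : Real.log (Real.sin x) ≤ Real.log x := Real.log_le_log hs0 hs1
      have hlog2 : Real.log (2/π) + Real.log x ≤ Real.log (Real.sin x) := by
        rw [← Real.log_mul (by positivity) hx0.ne']
        exact Real.log_le_log (by positivity) hs2
      have hneg : Real.log (Real.sin x) ≤ 0 :=
        Real.log_nonpos hs0.le (Real.sin_le_one x)
      have hxneg : Real.log x ≤ 0 := Real.log_nonpos hx0.le hx1
      have hpi2 : 0 ≤ Real.log (π/2) := Real.log_nonneg (by nlinarith [Real.pi_gt_three])
      rw [Real.norm_eq_abs (Real.log (Real.sin x)), _root_.abs_of_nonpos hneg,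
        Real.norm_eq_abs (‖Real.log x‖ + Real.log (π/2)),
        _root_.abs_of_nonneg (by positivity : (0:ℝ) ≤ ‖Real.log x‖ + Real.log (π/2)),
        Real.norm_eq_abs (Real.log x), _root_.abs_of_nonpos hxneg]
      have hinv : Real.log (2/π) = - Real.log (π/2) := by
        rw [← Real.log_inv]; norm_num
      nlinarith [hlog2, hinv]
  have h2 : IntegrableOn (fun x => Real.log (Real.sin x)) (Set.Ioc 1 (π/2)) volume := by
    refine (ContinuousOn.integrableOn_Icc ?_).mono_set Set.Ioc_subset_Icc_self
    apply Real.continuousOn_log.comp Real.continuous_sin.continuousOn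
    intro x hx
    have : 0 < Real.sin x := Real.sin_pos_of_pos_of_lt_pi (by linarith [hx.1])
      (by nlinarith [Real.pi_gt_three, hx.2])
    exact this.ne'
  have : Set.Ioc (0:ℝ) (π/2) ⊆ Set.Ioc 0 1 ∪ Set.Ioc 1 (π/2) := by
    intro x hx
    by_cases h : x ≤ 1
    · exact Or.inl ⟨hx.1, h⟩
    · exact Or.inr ⟨not_le.mp h, hx.2⟩
  exact (h1.union h2).mono_set this

lemma intIntLogSin : IntervalIntegrable (fun x => Real.log (Real.sin x)) volume 0 π := by
  have h2 := (intIntLogSinHalf.comp_sub_left π)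
  have : IntervalIntegrable (fun x => Real.log (Real.sin x)) volume (π - 0) (π - π/2) := by
    apply h2.congr_ae
    filter_upwards with x
    simp [Real.sin_pi_sub]
  rw [show π - π/2 = π/2 by ring, sub_zero] at this
  exact intIntLogSinHalf.trans this.symm

lemma intIntLogSinHalf2 : IntervalIntegrable (fun x => Real.log (Real.sin x)) volume (π/2) π := by
  have h2 := (intIntLogSinHalf.comp_sub_left π)
  have h3 : IntervalIntegrable (fun x => Real.log (Real.sin x)) volume (π - 0) (π - π/2) := by
    apply h2.congr_ae
    filter_upwards with x
    simp [Real.sin_pi_sub]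
  rw [show π - π/2 = π/2 by ring, sub_zero] at h3
  exact h3.symm

lemma intIntLogCos : IntervalIntegrable (fun x => Real.log (Real.cos x)) volume 0 (π/2) := by
  have h2 := (intIntLogSinHalf.comp_sub_left (π/2))
  rw [show π/2 - π/2 = 0 by ring, sub_zero] at h2
  apply h2.symm.congr_ae
  filter_upwards with x
  simp [Real.sin_pi_div_two_sub]

lemma reflJ : ∫ x in (π/2)..π, Real.log (Real.sin x) = ∫ x in (0:ℝ)..(π/2), Real.log (Real.sin x) := by
  have := intervalIntegral.integral_comp_sub_left (a := 0) (b := π/2)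
    (fun x => Real.log (Real.sin x)) π
  rw [show π - π/2 = π/2 by ring, sub_zero] at this
  rw [← this]
  apply intervalIntegral.integral_congr
  intro x _
  simp [Real.sin_pi_sub]

lemma reflCos : ∫ x in (0:ℝ)..(π/2), Real.log (Real.cos x)
    = ∫ x in (0:ℝ)..(π/2), Real.log (Real.sin x) := by
  have := intervalIntegral.integral_comp_sub_left (a := 0) (b := π/2)
    (fun x => Real.log (Real.sin x)) (π/2)
  rw [show π/2 - π/2 = 0 by ring, sub_zero] at this
  rw [← this]
  apply intervalIntegral.integral_congr
  intro x _
  simp [Real.sin_pi_div_two_sub]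

lemma integral_log_sin_pi : ∫ x in (0:ℝ)..π, Real.log (Real.sin x) = -(π * Real.log 2) := by
  set J := ∫ x in (0:ℝ)..(π/2), Real.log (Real.sin x) with hJ
  have htot : ∫ x in (0:ℝ)..π, Real.log (Real.sin x) = 2 * J := by
    rw [← intervalIntegral.integral_add_adjacent_intervals intIntLogSinHalf intIntLogSinHalf2,
      reflJ]
    ring
  have hdouble : ∫ x in (0:ℝ)..(π/2), Real.log (Real.sin (2*x)) = J := by
    rw [intervalIntegral.integral_comp_mul_left (fun x => Real.log (Real.sin x))
      (by norm_num : (2:ℝ) ≠ 0)]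
    rw [mul_zero, show (2:ℝ) * (π/2) = π by ring, htot]
    simp
  have hsplit : ∫ x in (0:ℝ)..(π/2), Real.log (Real.sin (2*x))
      = ∫ x in (0:ℝ)..(π/2), (Real.log 2 + Real.log (Real.sin x) + Real.log (Real.cos x)) := by
    apply intervalIntegral.integral_congr_ae
    have h0 : ∀ᵐ (x:ℝ), x ≠ π/2 := by
      rw [ae_iff]
      simpa using (Real.volume_singleton (x := π/2))
    filter_upwards [h0] with x hx hmem
    rw [Set.uIoc_of_le (by positivity : (0:ℝ) ≤ π/2)] at hmem
    have hx1 : 0 < x := hmem.1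
    have hx2 : x < π/2 := lt_of_le_of_ne hmem.2 hx
    have hs : 0 < Real.sin x := Real.sin_pos_of_pos_of_lt_pi hx1 (by linarith [Real.pi_pos])
    have hc : 0 < Real.cos x := Real.cos_pos_of_mem_Ioo ⟨by linarith [Real.pi_pos], hx2⟩
    rw [Real.sin_two_mul, Real.log_mul (by positivity) hc.ne', Real.log_mul (by norm_num) hs.ne']
  have hrhs : ∫ x in (0:ℝ)..(π/2), (Real.log 2 + Real.log (Real.sin x) + Real.log (Real.cos x))
      = π/2 * Real.log 2 + J + J := by
    rw [intervalIntegral.integral_add (by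
        exact (intervalIntegrable_const.add intIntLogSinHalf)) intIntLogCos,
      intervalIntegral.integral_add intervalIntegrable_const intIntLogSinHalf]
    rw [reflCos]
    simp only [intervalIntegral.integral_const, smul_eq_mul, sub_zero, ← hJ]
  have : J = π/2 * Real.log 2 + J + J := by rw [← hrhs, ← hsplit, hdouble]
  have hJval : J = -(π/2 * Real.log 2) := by linarith
  rw [htot, hJval]; ring

lemma ae_ne_endpoints : ∀ᵐ (x:ℝ) ∂(volume.restrict (Set.uIoc (0:ℝ) (2*π))),
    x ∈ Set.Ioo (0:ℝ) (2*π) := by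
  have h0 : ∀ᵐ (x:ℝ) ∂volume, x ≠ 2*π := by
    rw [ae_iff]; simpa using (Real.volume_singleton (x := 2*π))
  have h1 := ae_restrict_of_ae (μ := volume) (s := Set.uIoc (0:ℝ) (2*π)) h0
  have h2 : ∀ᵐ (x:ℝ) ∂(volume.restrict (Set.uIoc (0:ℝ) (2*π))),
      x ∈ Set.uIoc (0:ℝ) (2*π) :=
    ae_restrict_mem measurableSet_uIoc
  filter_upwards [h1, h2] with x hx hmem
  rw [Set.uIoc_of_le (by positivity : (0:ℝ) ≤ 2*π)] at hmem
  exact ⟨hmem.1, lt_of_le_of_ne hmem.2 hx⟩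

lemma log_one_sub_cos_eq {θ : ℝ} (h : θ ∈ Set.Ioo (0:ℝ) (2*π)) :
    Real.log (1 - Real.cos θ) = Real.log 2 + 2 * Real.log (Real.sin (θ/2)) := by
  have hs : 0 < Real.sin (θ/2) :=
    Real.sin_pos_of_pos_of_lt_pi (by linarith [h.1]) (by linarith [h.2])
  have hid : 1 - Real.cos θ = 2 * Real.sin (θ/2)^2 := by
    have h2 : Real.sin (θ/2)^2 = 1 - (1/2 + Real.cos (2*(θ/2))/2) := by
      rw [Real.sin_sq, Real.cos_sq]
    rw [show 2*(θ/2) = θ by ring] at h2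
    linarith
  rw [hid, Real.log_mul (by norm_num) (by positivity), Real.log_pow]
  push_cast; ring

lemma intInt_log_sin_half : IntervalIntegrable (fun θ => Real.log (Real.sin (θ/2)))
    volume 0 (2*π) := by
  have h := intIntLogSin.comp_mul_right (c := (2⁻¹ : ℝ)) enorm_ne_top enorm_ne_top
  rw [show (0:ℝ)/2⁻¹ = 0 by norm_num, show (π:ℝ)/2⁻¹ = 2*π by field_simp] at h
  apply h.congr_ae
  filter_upwards with x
  simp [div_eq_mul_inv]

lemma intInt_log_one_sub_cos : IntervalIntegrable (fun θ => Real.log (1 - Real.cos θ))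
    volume 0 (2*π) := by
  have : IntervalIntegrable (fun θ => Real.log 2 + 2 * Real.log (Real.sin (θ/2)))
      volume 0 (2*π) :=
    intervalIntegrable_const.add ((intInt_log_sin_half.const_mul 2))
  apply this.congr_ae
  filter_upwards [ae_ne_endpoints] with x hx
  exact (log_one_sub_cos_eq hx).symm

lemma integral_log_one_sub_cos : ∫ θ in (0:ℝ)..(2*π), Real.log (1 - Real.cos θ)
    = -(2*π*Real.log 2) := by
  have hcongr : ∫ θ in (0:ℝ)..(2*π), Real.log (1 - Real.cos θ)
      = ∫ θ in (0:ℝ)..(2*π), (Real.log 2 + 2 * Real.log (Real.sin (θ/2))) := by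
    apply intervalIntegral.integral_congr_ae
    have h0 : ∀ᵐ (x:ℝ), x ≠ 2*π := by
      rw [ae_iff]; simpa using (Real.volume_singleton (x := 2*π))
    filter_upwards [h0] with x hx hmem
    rw [Set.uIoc_of_le (by positivity : (0:ℝ) ≤ 2*π)] at hmem
    exact log_one_sub_cos_eq ⟨hmem.1, lt_of_le_of_ne hmem.2 hx⟩
  have hhalf : ∫ θ in (0:ℝ)..(2*π), Real.log (Real.sin (θ/2)) = -(2*π*Real.log 2) := by
    rw [intervalIntegral.integral_comp_div (c := 2) (fun x => Real.log (Real.sin x))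
      (by norm_num)]
    norm_num [integral_log_sin_pi]
    ring
  rw [hcongr, intervalIntegral.integral_add intervalIntegrable_const
    (intInt_log_sin_half.const_mul 2), intervalIntegral.integral_const_mul, hhalf]
  simp
  ring

noncomputable def Faux (θ : ℝ) : ℝ :=
  -4 * Real.cos (θ/2) * Real.negMulLog (Real.sin (θ/2)) + Real.sin θ * Real.log 2
    - θ - Real.sin θ

lemma Faux_eq {θ : ℝ} (h : θ ∈ Set.Ioo (0:ℝ) (2*π)) :
    Faux θ = Real.sin θ * Real.log (1 - Real.cos θ) - θ - Real.sin θ := by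
  have hs : 0 < Real.sin (θ/2) :=
    Real.sin_pos_of_pos_of_lt_pi (by linarith [h.1]) (by linarith [h.2])
  have hsin : Real.sin θ = 2 * Real.sin (θ/2) * Real.cos (θ/2) := by
    rw [show θ = 2*(θ/2) by ring, Real.sin_two_mul]
    ring_nf
  rw [Faux, log_one_sub_cos_eq h, Real.negMulLog, hsin]
  ring

lemma one_sub_cos_pos {θ : ℝ} (h : θ ∈ Set.Ioo (0:ℝ) (2*π)) : 0 < 1 - Real.cos θ := by
  have hs : 0 < Real.sin (θ/2) :=
    Real.sin_pos_of_pos_of_lt_pi (by linarith [h.1]) (by linarith [h.2])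
  have h2 : Real.sin (θ/2)^2 = 1 - (1/2 + Real.cos (2*(θ/2))/2) := by
    rw [Real.sin_sq, Real.cos_sq]
  rw [show 2*(θ/2) = θ by ring] at h2
  nlinarith

lemma Faux_hasDeriv {θ : ℝ} (h : θ ∈ Set.Ioo (0:ℝ) (2*π)) :
    HasDerivAt Faux (Real.cos θ * Real.log (1 - Real.cos θ)) θ := by
  have h1 : 0 < 1 - Real.cos θ := one_sub_cos_pos h
  have hinner : HasDerivAt (fun y => 1 - Real.cos y) (Real.sin θ) θ := by
    simpa using (Real.hasDerivAt_cos θ).const_sub (1:ℝ)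
  have hlog : HasDerivAt (fun y => Real.log (1 - Real.cos y))
      ((1 - Real.cos θ)⁻¹ * Real.sin θ) θ := by
    have := (Real.hasDerivAt_log h1.ne').comp θ hinner
    exact this
  have hprod := (Real.hasDerivAt_sin θ).mul hlog
  have hG := (hprod.sub (hasDerivAt_id θ)).sub (Real.hasDerivAt_sin θ)
  have hval : Real.cos θ * Real.log (1 - Real.cos θ)
      + Real.sin θ * ((1 - Real.cos θ)⁻¹ * Real.sin θ) - 1 - Real.cos θ
      = Real.cos θ * Real.log (1 - Real.cos θ) := by
    have hsq := Real.sin_sq_add_cos_sq θ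
    field_simp
    nlinarith
  rw [hval] at hG
  apply hG.congr_of_eventuallyEq
  filter_upwards [isOpen_Ioo.mem_nhds h] with y hy
  exact Faux_eq hy

lemma intInt_cos_mul_log : IntervalIntegrable
    (fun θ => Real.cos θ * Real.log (1 - Real.cos θ)) volume 0 (2*π) := by
  have hc : Continuous (fun θ : ℝ => Real.negMulLog (1 - Real.cos θ)) :=
    Real.continuous_negMulLog.comp (continuous_const.sub Real.continuous_cos)
  apply (intInt_log_one_sub_cos.add (hc.intervalIntegrable 0 (2*π))).congr_ae
  filter_upwards with x
  rw [Real.negMulLog]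
  ring

lemma integral_cos_mul_log :
    ∫ θ in (0:ℝ)..(2*π), Real.cos θ * Real.log (1 - Real.cos θ) = -(2*π) := by
  have hcont : ContinuousOn Faux (Set.Icc 0 (2*π)) := by
    apply Continuous.continuousOn
    unfold Faux
    have c1 : Continuous (fun θ : ℝ => θ/2) := continuous_id.div_const 2
    exact ((((continuous_const.mul (Real.continuous_cos.comp c1)).mul
      (Real.continuous_negMulLog.comp (Real.continuous_sin.comp c1))).add
      (Real.continuous_sin.mul continuous_const)).sub continuous_id).sub Real.continuous_sin
  have := intervalIntegral.integral_eq_sub_of_hasDeriv_right_of_le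
    (by positivity : (0:ℝ) ≤ 2*π) hcont
    (fun x hx => (Faux_hasDeriv hx).hasDerivWithinAt) intInt_cos_mul_log
  rw [this]
  unfold Faux
  norm_num [Real.sin_two_pi, Real.cos_pi, Real.negMulLog_zero, Real.sin_pi]

lemma integral_main :
    ∫ θ in (0:ℝ)..(2*π), (1 - Real.cos θ) * Real.log (1 - Real.cos θ)
      = 2*π*(1 - Real.log 2) := by
  have heq : ∀ θ : ℝ, (1 - Real.cos θ) * Real.log (1 - Real.cos θ)
      = Real.log (1 - Real.cos θ) - Real.cos θ * Real.log (1 - Real.cos θ) := by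
    intro θ; ring
  rw [intervalIntegral.integral_congr (fun x _ => heq x),
    intervalIntegral.integral_sub intInt_log_one_sub_cos intInt_cos_mul_log,
    integral_log_one_sub_cos, integral_cos_mul_log]
  ring

lemma measurable_phi : Measurable (fun θ : ℝ => Complex.exp (θ * Complex.I)) :=
  (Complex.continuous_exp.comp (Complex.continuous_ofReal.mul continuous_const)).measurable

lemma cos_arg_exp (θ : ℝ) :
    Real.cos (Complex.arg (Complex.exp (θ * Complex.I))) = Real.cos θ := by
  rw [Complex.cos_arg (Complex.exp_ne_zero _), Complex.norm_exp_ofReal_mul_I,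
    Complex.exp_ofReal_mul_I_re]
  simp

lemma coef_ne_zero : (ENNReal.ofReal (2 * Real.pi))⁻¹ ≠ 0 := by
  exact ENNReal.inv_ne_zero.mpr ENNReal.ofReal_ne_top

lemma coef_ne_top : (ENNReal.ofReal (2 * Real.pi))⁻¹ ≠ ⊤ := by
  rw [Ne, ENNReal.inv_eq_top]
  exact (ENNReal.ofReal_pos.mpr (by positivity)).ne'

instance UNIF_prob : IsProbabilityMeasure UNIF := by
  constructor
  rw [UNIF, Measure.smul_apply, Measure.map_apply measurable_phi MeasurableSet.univ,
    Set.preimage_univ, Measure.restrict_apply_univ, Real.volume_Ico, smul_eq_mul, sub_zero]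
  exact ENNReal.inv_mul_cancel (by positivity) ENNReal.ofReal_ne_top

lemma integrable_UNIF {g : ℂ → ℝ} (hg : Measurable g)
    (hint : IntegrableOn (fun θ : ℝ => g (Complex.exp (θ * Complex.I)))
      (Set.Ico 0 (2*π)) volume) : Integrable g UNIF := by
  rw [UNIF, integrable_smul_measure coef_ne_zero coef_ne_top,
    integrable_map_measure hg.aestronglyMeasurable measurable_phi.aemeasurable]
  exact hint

lemma integral_UNIF (g : ℂ → ℝ) (hg : Measurable g) :
    ∫ z, g z ∂UNIF = (2*π)⁻¹ * ∫ θ in Set.Ico (0:ℝ) (2*π),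
      g (Complex.exp (θ * Complex.I)) := by
  rw [UNIF, MeasureTheory.integral_smul_measure,
    integral_map measurable_phi.aemeasurable hg.aestronglyMeasurable,
    smul_eq_mul, ENNReal.toReal_inv, ENNReal.toReal_ofReal (by positivity)]

lemma hden_meas : Measurable fun z : ℂ => 1 - 1 * Real.cos z.arg :=
  measurable_const.sub ((Real.measurable_cos.comp Complex.measurable_arg).const_mul 1)

lemma hden_nonneg (z : ℂ) : 0 ≤ 1 - 1 * Real.cos z.arg := by
  nlinarith [Real.cos_le_one z.arg]

lemma hdenE_meas : Measurable fun z : ℂ => ENNReal.ofReal (1 - 1 * Real.cos z.arg) :=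
  ENNReal.measurable_ofReal.comp hden_meas

lemma mu10_ac : (mu10 1) ≪ UNIF := withDensity_absolutelyContinuous _ _

lemma mu10_rnDeriv : (mu10 1).rnDeriv UNIF
    =ᵐ[UNIF] fun z => ENNReal.ofReal (1 - 1 * Real.cos z.arg) :=
  Measure.rnDeriv_withDensity UNIF hdenE_meas

lemma log_rn_ae : (fun z => Real.log (((mu10 1).rnDeriv UNIF) z).toReal)
    =ᵐ[UNIF] fun z => Real.log (1 - 1 * Real.cos z.arg) := by
  filter_upwards [mu10_rnDeriv] with z hz
  rw [hz, ENNReal.toReal_ofReal (hden_nonneg z)]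

lemma log_rn_ae' : (fun z => Real.log (((mu10 1).rnDeriv UNIF) z).toReal)
    =ᵐ[(mu10 1)] fun z => Real.log (1 - 1 * Real.cos z.arg) :=
  mu10_ac.ae_le log_rn_ae

lemma Lmeas : Measurable fun z : ℂ => Real.log (1 - 1 * Real.cos z.arg) :=
  Real.measurable_log.comp hden_meas

lemma prod_integrable_UNIF : Integrable
    (fun z => Real.log (1 - 1 * Real.cos z.arg) * (1 - 1 * Real.cos z.arg)) UNIF := by
  apply integrable_UNIF (Lmeas.mul hden_meas)
  have heq : (fun θ : ℝ => Real.log (1 - 1 * Real.cos (Complex.arg (Complex.exp (θ * Complex.I))))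
      * (1 - 1 * Real.cos (Complex.arg (Complex.exp (θ * Complex.I)))))
      = fun θ : ℝ => -Real.negMulLog (1 - Real.cos θ) := by
    funext θ
    rw [cos_arg_exp, Real.negMulLog]
    ring
  simp only [Pi.mul_apply]
  rw [heq]
  exact ((Real.continuous_negMulLog.comp
    (continuous_const.sub Real.continuous_cos)).neg.integrableOn_Icc).mono_set
    Set.Ico_subset_Icc_self

lemma L_integrable : Integrable (fun z => Real.log (1 - 1 * Real.cos z.arg)) (mu10 1) := by
  rw [show (mu10 1) = UNIF.withDensity (fun z => ENNReal.ofReal (1 - 1 * Real.cos z.arg)) from rfl,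
    integrable_withDensity_iff hdenE_meas
    (Filter.Eventually.of_forall fun x => ENNReal.ofReal_lt_top)]
  apply prod_integrable_UNIF.congr
  filter_upwards with z
  rw [ENNReal.toReal_ofReal (hden_nonneg z)]

lemma KL_integrand_integrable :
    Integrable (fun z => Real.log (((mu10 1).rnDeriv UNIF) z).toReal) (mu10 1) :=
  L_integrable.congr log_rn_ae'.symm

lemma integral_KL_value :
    ∫ z, Real.log (((mu10 1).rnDeriv UNIF) z).toReal ∂(mu10 1) = 1 - Real.log 2 := by
  rw [integral_congr_ae log_rn_ae']
  have h1 : (mu10 1) = UNIF.withDensity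
      (fun z => ((1 - 1 * Real.cos z.arg).toNNReal : ℝ≥0∞)) := rfl
  have hnn_meas : Measurable fun z : ℂ => (1 - 1 * Real.cos z.arg).toNNReal :=
    measurable_real_toNNReal.comp hden_meas
  rw [h1, integral_withDensity_eq_integral_smul hnn_meas]
  have h2 : (fun z : ℂ => (1 - 1 * Real.cos z.arg).toNNReal
        • Real.log (1 - 1 * Real.cos z.arg))
      = fun z : ℂ => (1 - Real.cos z.arg) * Real.log (1 - Real.cos z.arg) := by
    funext z
    rw [NNReal.smul_def, smul_eq_mul, Real.coe_toNNReal _ (hden_nonneg z), one_mul]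
  have hm : Measurable fun z : ℂ => (1 - Real.cos z.arg) * Real.log (1 - Real.cos z.arg) := by
    have h : Measurable fun z : ℂ => 1 - Real.cos z.arg :=
      measurable_const.sub (Complex.measurable_arg.cos)
    exact h.mul h.log
  rw [h2, integral_UNIF _ hm]
  have h3 : ∫ θ in Set.Ico (0:ℝ) (2*π), (1 - Real.cos (Complex.arg (Complex.exp (θ * Complex.I))))
        * Real.log (1 - Real.cos (Complex.arg (Complex.exp (θ * Complex.I))))
      = ∫ θ in (0:ℝ)..(2*π), (1 - Real.cos θ) * Real.log (1 - Real.cos θ) := by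
    rw [MeasureTheory.integral_Ico_eq_integral_Ioo, ← MeasureTheory.integral_Ioc_eq_integral_Ioo,
      ← intervalIntegral.integral_of_le (by positivity : (0:ℝ) ≤ 2*π)]
    apply intervalIntegral.integral_congr
    intro θ _
    simp only [cos_arg_exp]
  rw [h3, integral_main]
  have hπ : (π:ℝ) ≠ 0 := Real.pi_ne_zero
  field_simp


end AuxProofs

/-- 𝒦(μ^{1,0} | UNIF) = 1 − log 2. -/
theorem statement11 :
    KL (mu10 1) UNIF = ENNReal.ofReal (1 - Real.log 2) ∧
    (1 / (2 * Real.pi)) * ∫ θ in (0 : ℝ)..(2 * Real.pi),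
        (1 - Real.cos θ) * Real.log (1 - Real.cos θ) = 1 - Real.log 2 := by
  constructor
  · rw [KL, if_pos ⟨mu10_ac, KL_integrand_integrable⟩, integral_KL_value]
  · rw [integral_main]
    have hπ : (π:ℝ) ≠ 0 := Real.pi_ne_zero
    field_simp

end
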